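/- Let γ > 0 and β > 0 be reals. There exists a constant c > 0 (depending only on γ and β) such that for all real numbers b₁, b₂, z with |z| ≤ β|b₁| one has ||b₁+b₂|^{γ−1}(b₁+b₂)z − |b₁|^{γ−1}b₁z − γ|b₁|^{γ−1}b₂z| ≤ c(|b₁|^{γ−1} b₂² + |b₂|^{γ+1}). -/

import Mathlib

open Real Set

-- Step 1: |x^(γ-1) - 1| ≤ K |x - 1| on [1/2, 3/2]
lemma step1 (γ : ℝ) (hγ : 0 < γ) :
    ∃ K : ℝ, 0 < K ∧ ∀ x ∈ Icc (1/2 : ℝ) (3/2), |x ^ (γ-1) - 1| ≤ K * |x - 1| := by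
  obtain ⟨M, hM⟩ : ∃ M : ℝ, M = |γ - 1| * max ((1/2 : ℝ) ^ (γ-2)) ((3/2 : ℝ) ^ (γ-2)) + 1 := ⟨_, rfl⟩
  have hMpos : 0 < M := by
    have : (0:ℝ) ≤ |γ - 1| * max ((1/2 : ℝ) ^ (γ-2)) ((3/2 : ℝ) ^ (γ-2)) := by positivity
    linarith
  refine ⟨M, hMpos, fun x hx => ?_⟩
  have key : ∀ y ∈ Icc (1/2 : ℝ) (3/2), ‖(γ-1) * y ^ (γ-2)‖ ≤ M := by
    intro y hy
    have hy0 : (0:ℝ) < y := lt_of_lt_of_le (by norm_num) hy.1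
    have hb : y ^ (γ-2) ≤ max ((1/2 : ℝ) ^ (γ-2)) ((3/2 : ℝ) ^ (γ-2)) := by
      rcases le_or_gt 0 (γ - 2) with h | h
      · exact le_max_of_le_right (Real.rpow_le_rpow hy0.le hy.2 h)
      · exact le_max_of_le_left (Real.rpow_le_rpow_of_nonpos (by norm_num) hy.1 h.le)
    have : ‖(γ-1) * y ^ (γ-2)‖ = |γ-1| * y ^ (γ-2) := by
      rw [Real.norm_eq_abs, abs_mul, abs_of_nonneg (Real.rpow_nonneg hy0.le _)]
    rw [this]
    have h1 : |γ-1| * y ^ (γ-2) ≤ |γ-1| * max ((1/2 : ℝ) ^ (γ-2)) ((3/2 : ℝ) ^ (γ-2)) :=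
      mul_le_mul_of_nonneg_left hb (abs_nonneg _)
    rw [hM]; linarith
  have hmvt := Convex.norm_image_sub_le_of_norm_hasDerivWithin_le
    (f := fun y : ℝ => y ^ (γ-1)) (f' := fun y : ℝ => (γ-1) * y ^ (γ-2))
    (s := Icc (1/2 : ℝ) (3/2)) (C := M)
    (fun y hy => by
      have hy0 : y ≠ 0 := by
        have : (0:ℝ) < y := lt_of_lt_of_le (by norm_num) hy.1
        exact this.ne'
      have := Real.hasDerivAt_rpow_const (x := y) (p := γ - 1) (Or.inl hy0)
      have h2 : γ - 1 - 1 = γ - 2 := by ring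
      rw [h2] at this
      exact this.hasDerivWithinAt)
    key (convex_Icc _ _) (by norm_num : (1:ℝ) ∈ Icc (1/2 : ℝ) (3/2)) hx
  simpa [Real.norm_eq_abs, Real.one_rpow] using hmvt

-- Step 2: |x^γ - 1 - γ(x-1)| ≤ K (x-1)^2 on [1/2, 3/2]
lemma step2 (γ : ℝ) (hγ : 0 < γ) :
    ∃ K : ℝ, 0 < K ∧ ∀ x ∈ Icc (1/2 : ℝ) (3/2), |x ^ γ - 1 - γ * (x - 1)| ≤ K * (x - 1)^2 := by
  obtain ⟨K, hK, hK1⟩ := step1 γ hγ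
  refine ⟨γ * K, by positivity, fun x hx => ?_⟩
  have hsub : uIcc (1:ℝ) x ⊆ Icc (1/2 : ℝ) (3/2) :=
    uIcc_subset_Icc (by norm_num) hx
  have key : ∀ y ∈ uIcc (1:ℝ) x, ‖γ * y ^ (γ-1) - γ‖ ≤ γ * K * |x - 1| := by
    intro y hy
    have hy' := hsub hy
    have h1 : |y - 1| ≤ |x - 1| := by
      rcases le_total 1 x with h | h
      · rw [uIcc_of_le h] at hy
        rw [abs_of_nonneg (by linarith [hy.1]), abs_of_nonneg (by linarith)]
        linarith [hy.2]
      · rw [uIcc_of_ge h] at hy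
        rw [abs_of_nonpos (by linarith [hy.2]), abs_of_nonpos (by linarith)]
        linarith [hy.1]
    have h2 : ‖γ * y ^ (γ-1) - γ‖ = γ * |y ^ (γ-1) - 1| := by
      rw [Real.norm_eq_abs, show γ * y ^ (γ-1) - γ = γ * (y ^ (γ-1) - 1) by ring,
        abs_mul, abs_of_pos hγ]
    rw [h2]
    calc γ * |y ^ (γ-1) - 1| ≤ γ * (K * |y - 1|) :=
          mul_le_mul_of_nonneg_left (hK1 y hy') hγ.le
      _ ≤ γ * K * |x - 1| := by
          rw [mul_assoc]
          exact mul_le_mul_of_nonneg_left (mul_le_mul_of_nonneg_left h1 hK.le) hγ.le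
  have hmvt := Convex.norm_image_sub_le_of_norm_hasDerivWithin_le
    (f := fun y : ℝ => y ^ γ - γ * y) (f' := fun y : ℝ => γ * y ^ (γ-1) - γ)
    (s := uIcc (1:ℝ) x) (C := γ * K * |x - 1|)
    (fun y hy => by
      have hy0 : y ≠ 0 := by
        have := (hsub hy).1
        intro h; rw [h] at this; norm_num at this
      have hd := Real.hasDerivAt_rpow_const (x := y) (p := γ) (Or.inl hy0)
      exact ((hd.sub ((hasDerivAt_id y).const_mul γ)).congr_deriv (by ring)).hasDerivWithinAt)
    key (convex_uIcc _ _) (left_mem_uIcc) (right_mem_uIcc)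
  simp only [Real.norm_eq_abs, Real.one_rpow, mul_one] at hmvt
  calc |x ^ γ - 1 - γ * (x - 1)| = |x ^ γ - γ * x - (1 - γ)| := by congr 1; ring
    _ ≤ γ * K * |x - 1| * |x - 1| := hmvt
    _ = γ * K * (x - 1)^2 := by rw [mul_assoc, ← abs_mul, ← sq, abs_sq]

-- Scalar lemma
lemma scalar (γ : ℝ) (hγ : 0 < γ) :
    ∃ c : ℝ, 0 < c ∧ ∀ t : ℝ,
      abs (|1 + t| ^ (γ-1) * (1 + t) - 1 - γ * t) ≤ c * (t^2 + |t| ^ (γ+1)) := by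
  obtain ⟨K, hK, hK2⟩ := step2 γ hγ
  refine ⟨K + 2 * 3 ^ γ + 4 + 2 * γ, by positivity, fun t => ?_⟩
  have hrnn : (0:ℝ) ≤ |t| ^ (γ+1) := Real.rpow_nonneg (abs_nonneg _) _
  rcases le_or_gt |t| (1/2) with ht | ht
  · -- small t : use step2 with x = 1 + t
    have habs := abs_le.mp ht
    have hx : (1 + t) ∈ Icc (1/2 : ℝ) (3/2) := ⟨by linarith, by linarith⟩
    have hpos : (0:ℝ) < 1 + t := by linarith
    have he : |1 + t| ^ (γ-1) * (1 + t) = (1 + t) ^ γ := by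
      rw [abs_of_pos hpos, ← Real.rpow_add_one hpos.ne' (γ-1)]
      norm_num
    have := hK2 (1 + t) hx
    rw [add_sub_cancel_left] at this
    rw [he]
    have hle : |(1 + t) ^ γ - 1 - γ * t| ≤ K * t ^ 2 := this
    have h3g : (0:ℝ) ≤ 3 ^ (γ:ℝ) := Real.rpow_nonneg (by norm_num) _
    nlinarith [sq_nonneg t, mul_nonneg h3g (sq_nonneg t), mul_nonneg h3g hrnn,
      mul_nonneg hK.le hrnn, mul_nonneg hγ.le (sq_nonneg t), mul_nonneg hγ.le hrnn]
  · -- large t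
    have ht2 : (1:ℝ) ≤ 2 * |t| := by linarith
    have h1t : abs (|1 + t| ^ (γ-1) * (1 + t)) = |1 + t| ^ γ := by
      rcases eq_or_ne (1 + t) 0 with h | h
      · rw [h]; simp [Real.zero_rpow hγ.ne']
      · rw [abs_mul, abs_of_nonneg (Real.rpow_nonneg (abs_nonneg _) _),
          ← Real.rpow_add_one (abs_ne_zero.mpr h) (γ-1)]
        norm_num
    have hb : |1 + t| ≤ 3 * |t| := by
      calc |1 + t| ≤ |(1:ℝ)| + |t| := abs_add_le 1 t
        _ = 1 + |t| := by rw [abs_one]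
        _ ≤ 3 * |t| := by linarith
    have hb2 : |1 + t| ^ γ ≤ 3 ^ γ * |t| ^ γ := by
      calc |1 + t| ^ γ ≤ (3 * |t|) ^ γ := Real.rpow_le_rpow (abs_nonneg _) hb hγ.le
        _ = 3 ^ γ * |t| ^ γ := Real.mul_rpow (by norm_num) (abs_nonneg _)
    have hb3 : |t| ^ γ ≤ 2 * |t| ^ (γ+1) := by
      have ht0 : |t| ≠ 0 := by positivity
      have : |t| ^ (γ+1) = |t| ^ γ * |t| := Real.rpow_add_one ht0 γ
      rw [this]
      have hg0 : (0:ℝ) ≤ |t| ^ γ := Real.rpow_nonneg (abs_nonneg _) _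
      nlinarith
    have htri : abs (|1 + t| ^ (γ-1) * (1 + t) - 1 - γ * t) ≤ |1 + t| ^ γ + 1 + γ * |t| := by
      calc abs (|1 + t| ^ (γ-1) * (1 + t) - 1 - γ * t)
          ≤ abs (|1 + t| ^ (γ-1) * (1 + t)) + |1 + γ * t| := by
            rw [show |1 + t| ^ (γ-1) * (1 + t) - 1 - γ * t
              = |1 + t| ^ (γ-1) * (1 + t) - (1 + γ * t) by ring]
            exact abs_sub _ _
        _ ≤ |1 + t| ^ γ + (1 + γ * |t|) := by
            rw [h1t]
            have : |1 + γ * t| ≤ 1 + γ * |t| := by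
              calc |1 + γ * t| ≤ |(1:ℝ)| + |γ * t| := abs_add_le _ _
                _ = 1 + γ * |t| := by rw [abs_one, abs_mul, abs_of_pos hγ]
            linarith
        _ = |1 + t| ^ γ + 1 + γ * |t| := by ring
    have h4 : (1:ℝ) ≤ 4 * t ^ 2 := by nlinarith [sq_abs t]
    have h6 : |t| ≤ 2 * t ^ 2 := by nlinarith [sq_abs t]
    have h5 : γ * |t| ≤ γ * (2 * t ^ 2) := mul_le_mul_of_nonneg_left h6 hγ.le
    have h3g : (0:ℝ) ≤ 3 ^ (γ:ℝ) := Real.rpow_nonneg (by norm_num) _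
    have h7 : 3 ^ (γ:ℝ) * |t| ^ γ ≤ 3 ^ (γ:ℝ) * (2 * |t| ^ (γ+1)) :=
      mul_le_mul_of_nonneg_left hb3 h3g
    have hfin : abs (|1 + t| ^ (γ-1) * (1 + t) - 1 - γ * t)
        ≤ 3 ^ (γ:ℝ) * (2 * |t| ^ (γ+1)) + 4 * t ^ 2 + γ * (2 * t ^ 2) := by
      linarith
    have hK2' : (0:ℝ) ≤ K * t ^ 2 := by positivity
    have hKr : (0:ℝ) ≤ K * |t| ^ (γ+1) := by positivity
    nlinarith [mul_nonneg h3g (sq_nonneg t), mul_nonneg hγ.le hrnn]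

theorem stmt_5 (γ β : ℝ) (hγ : 0 < γ) (hβ : 0 < β) :
    ∃ c : ℝ, 0 < c ∧ ∀ b₁ b₂ z : ℝ, |z| ≤ β * |b₁| →
      abs (|b₁ + b₂| ^ (γ - 1) * (b₁ + b₂) * z - |b₁| ^ (γ - 1) * b₁ * z
        - γ * |b₁| ^ (γ - 1) * b₂ * z)
        ≤ c * (|b₁| ^ (γ - 1) * b₂ ^ 2 + |b₂| ^ (γ + 1)) := by
  obtain ⟨cs, hcs, hs⟩ := scalar γ hγ
  refine ⟨cs * β, by positivity, fun b₁ b₂ z hz => ?_⟩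
  rcases eq_or_ne b₁ 0 with hb1 | hb1
  · have hz0 : z = 0 := by
      rw [hb1, abs_zero, mul_zero] at hz
      exact abs_eq_zero.mp (le_antisymm hz (abs_nonneg z))
    rw [hz0]
    simp only [mul_zero, sub_zero, abs_zero]
    positivity
  · have hb0 : |b₁| ≠ 0 := abs_ne_zero.mpr hb1
    have hbpos : (0:ℝ) < |b₁| := abs_pos.mpr hb1
    set t : ℝ := b₂ / b₁ with htdef
    have hb : b₂ = b₁ * t := by rw [htdef]; field_simp
    have key : |b₁ + b₂| ^ (γ - 1) * (b₁ + b₂) * z - |b₁| ^ (γ - 1) * b₁ * z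
        - γ * |b₁| ^ (γ - 1) * b₂ * z
        = (|b₁| ^ (γ - 1) * b₁ * z) * (|1 + t| ^ (γ - 1) * (1 + t) - 1 - γ * t) := by
      have h1 : b₁ + b₂ = b₁ * (1 + t) := by rw [hb]; ring
      rw [h1, abs_mul, Real.mul_rpow (abs_nonneg _) (abs_nonneg _), hb]
      ring
    have hrn : (0:ℝ) ≤ |b₁| ^ (γ - 1) := Real.rpow_nonneg (abs_nonneg _) _
    have e1 : |b₁| * |b₁| * t ^ 2 = b₂ ^ 2 := by
      rw [hb, mul_pow, abs_mul_abs_self]; ring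
    have e2 : |b₁| ^ (γ - 1) * |b₁| * |b₁| * |t| ^ (γ + 1) = |b₂| ^ (γ + 1) := by
      have h3 : |b₁| ^ (γ - 1) * |b₁| * |b₁| = |b₁| ^ (γ + 1) := by
        rw [← Real.rpow_add_one hb0 (γ - 1)]
        rw [show γ - 1 + 1 = γ by ring, ← Real.rpow_add_one hb0 γ]
      rw [h3, ← Real.mul_rpow (abs_nonneg _) (abs_nonneg _), ← abs_mul, ← hb]
    calc abs (|b₁ + b₂| ^ (γ - 1) * (b₁ + b₂) * z - |b₁| ^ (γ - 1) * b₁ * z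
          - γ * |b₁| ^ (γ - 1) * b₂ * z)
        = (|b₁| ^ (γ - 1) * |b₁| * |z|) *
            abs (|1 + t| ^ (γ - 1) * (1 + t) - 1 - γ * t) := by
          rw [key, abs_mul, abs_mul, abs_mul, abs_of_nonneg hrn]
      _ ≤ (|b₁| ^ (γ - 1) * |b₁| * (β * |b₁|)) * (cs * (t ^ 2 + |t| ^ (γ + 1))) := by
          apply mul_le_mul
          · exact mul_le_mul_of_nonneg_left hz (by positivity)
          · exact hs t
          · exact abs_nonneg _
          · positivity
      _ = (cs * β) * (|b₁| ^ (γ - 1) * (|b₁| * |b₁| * t ^ 2)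
            + |b₁| ^ (γ - 1) * |b₁| * |b₁| * |t| ^ (γ + 1)) := by ring
      _ = (cs * β) * (|b₁| ^ (γ - 1) * b₂ ^ 2 + |b₂| ^ (γ + 1)) := by rw [e1, e2]
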